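/- Consider majority-regime dynamics with skew λ ≠ 1 on a graph G, with i* such that λ^{1-2i*} < 1, and let ℓ_λ = ⌈max{λ, λ^{-1}}⌉. Let C ≥ ℓ_λ + 4 and let H be the set of vertices of G of degree at least C. Suppose every vertex of H has at most ℓ_λ + 1 neighbours outside H. If at time t all vertices of H play strategy i*, then all vertices of H play strategy i* at time t+1 (and hence at all subsequent times). -/

import Mathlib

open Finset

variable {V : Type*} [Fintype V] [DecidableEq V]

/-- Number of neighbours of `v` playing strategy `j` under configuration `S`
(`false` = strategy 0, `true` = strategy 1). -/
def nbc (G : SimpleGraph V) [DecidableRel G.Adj] (S : V → Bool) (j : Bool) (v : V) : ℕ :=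
  ((G.neighborFinset v).filter fun u => S u = j).card

/-- Best-response step for payoff matrix `q` (rows/columns: `false` = 0, `true` = 1):
a vertex switches strategy iff its alternative payoff strictly exceeds its total payoff. -/
noncomputable def brStep (q : Bool → Bool → ℝ) (G : SimpleGraph V) [DecidableRel G.Adj]
    (S : V → Bool) : V → Bool := fun v =>
  if (nbc G S false v : ℝ) * q (S v) false + (nbc G S true v : ℝ) * q (S v) true <
      (nbc G S false v : ℝ) * q (!(S v)) false + (nbc G S true v : ℝ) * q (!(S v)) true
  then !(S v) else S v

/-- `lamPow lam i` is `lam ^ (1 - 2 i)` for `i ∈ {0,1}` (`false` = 0, `true` = 1). -/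
noncomputable def lamPow (lam : ℝ) (i : Bool) : ℝ := if i then lam⁻¹ else lam

/-- Majority-regime step with skew `lam`: a vertex playing `i` switches iff
`n(v;i) < lam^(1-2i) * n(v;1-i)`. -/
noncomputable def majStep (lam : ℝ) (G : SimpleGraph V) [DecidableRel G.Adj]
    (S : V → Bool) : V → Bool := fun v =>
  if (nbc G S (S v) v : ℝ) < lamPow lam (S v) * (nbc G S (!(S v)) v : ℝ) then !(S v) else S v

/-- Minority-regime step with skew `lam`: a vertex playing `i` switches iff
`n(v;i) > lam^(1-2i) * n(v;1-i)`. -/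
noncomputable def minStep (lam : ℝ) (G : SimpleGraph V) [DecidableRel G.Adj]
    (S : V → Bool) : V → Bool := fun v =>
  if lamPow lam (S v) * (nbc G S (!(S v)) v : ℝ) < (nbc G S (S v) v : ℝ) then !(S v) else S v

/-- Majority dynamics step: adopt the state of the majority of the neighbourhood,
keeping the current state in case of a tie. -/
def majDyn (G : SimpleGraph V) [DecidableRel G.Adj] (S : V → Bool) : V → Bool := fun v =>
  if nbc G S false v < nbc G S true v then true
  else if nbc G S true v < nbc G S false v then false
  else S v

/-- Minority dynamics step: adopt the state of the minority of the neighbourhood,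
keeping the current state in case of a tie. -/
def minDyn (G : SimpleGraph V) [DecidableRel G.Adj] (S : V → Bool) : V → Bool := fun v =>
  if nbc G S false v < nbc G S true v then false
  else if nbc G S true v < nbc G S false v then true
  else S v

/-- majority regime, `ℓ_λ = ⌈max{λ, λ⁻¹}⌉`, `C ≥ ℓ_λ + 4`, and `H` the
set of vertices of degree at least `C`, each having at most `ℓ_λ + 1` neighbours outside
`H`: if all of `H` plays `i*` at time `t`, then all of `H` plays `i*` at all times `s ≥ t`. -/
theorem stmt12 (lam : ℝ) (hpos : 0 < lam) (hne : lam ≠ 1) (istar : Bool)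
    (hi : lamPow lam istar = min lam lam⁻¹)
    (G : SimpleGraph V) [DecidableRel G.Adj] (C : ℕ)
    (hC : Nat.ceil (max lam lam⁻¹) + 4 ≤ C)
    (hout : ∀ v, C ≤ G.degree v →
      ((G.neighborFinset v).filter fun u => G.degree u < C).card ≤
        Nat.ceil (max lam lam⁻¹) + 1)
    (S : ℕ → V → Bool) (hS : ∀ t, S (t + 1) = majStep lam G (S t))
    (t : ℕ) (hall : ∀ v, C ≤ G.degree v → S t v = istar) :
    ∀ s ≥ t, ∀ v, C ≤ G.degree v → S s v = istar := by
  set L : ℕ := Nat.ceil (max lam lam⁻¹) with hL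
  have hM1 : 1 < max lam lam⁻¹ := by
    rcases lt_or_gt_of_ne hne with h | h
    · exact lt_max_of_lt_right (one_lt_inv_iff₀.mpr ⟨hpos, h⟩)
    · exact lt_max_of_lt_left h
  have hmn_pos : 0 < min lam lam⁻¹ := lt_min hpos (inv_pos.mpr hpos)
  have hmm : min lam lam⁻¹ * max lam lam⁻¹ = 1 := by
    rw [min_mul_max, mul_inv_cancel₀ hpos.ne']
  -- one-step lemma
  have step : ∀ S' : V → Bool, (∀ v, C ≤ G.degree v → S' v = istar) →
      ∀ v, C ≤ G.degree v → majStep lam G S' v = istar := by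
    intro S' h v hv
    have hSv : S' v = istar := h v hv
    have hsplit : nbc G S' istar v + nbc G S' (!istar) v = G.degree v := by
      have := Finset.card_filter_add_card_filter_not
        (s := G.neighborFinset v) (p := fun u => S' u = istar)
      simp only [nbc, SimpleGraph.card_neighborFinset_eq_degree] at this ⊢
      rw [← this]
      congr 2
      refine Finset.filter_congr ?_
      intro u _
      cases istar <;> cases (S' u) <;> simp
    have hm : nbc G S' (!istar) v ≤ L + 1 := by
      refine le_trans ?_ (hout v hv)
      apply Finset.card_le_card
      intro u hu
      simp only [Finset.mem_filter] at hu ⊢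
      refine ⟨hu.1, ?_⟩
      by_contra hc
      push_neg at hc
      have := h u hc
      rw [this] at hu
      cases istar <;> simp at hu
    have hn : 3 ≤ nbc G S' istar v := by
      have : L + 4 ≤ nbc G S' istar v + (L + 1) := by
        calc L + 4 ≤ C := hC
        _ ≤ G.degree v := hv
        _ = nbc G S' istar v + nbc G S' (!istar) v := hsplit.symm
        _ ≤ nbc G S' istar v + (L + 1) := by omega
      omega
    -- real inequality
    have hLreal : (L : ℝ) < max lam lam⁻¹ + 1 := by
      have := Nat.ceil_lt_add_one (le_of_lt (lt_trans one_pos hM1))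
      simpa [hL] using this
    have key : lamPow lam istar * (nbc G S' (!istar) v : ℝ) < (nbc G S' istar v : ℝ) := by
      rw [hi]
      have h1 : (nbc G S' (!istar) v : ℝ) ≤ (L : ℝ) + 1 := by exact_mod_cast hm
      have h2 : (3 : ℝ) ≤ (nbc G S' istar v : ℝ) := by exact_mod_cast hn
      have h3 : (L : ℝ) + 1 < 3 * max lam lam⁻¹ := by nlinarith
      calc min lam lam⁻¹ * (nbc G S' (!istar) v : ℝ)
          ≤ min lam lam⁻¹ * ((L : ℝ) + 1) := by
            exact mul_le_mul_of_nonneg_left h1 hmn_pos.le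
        _ < min lam lam⁻¹ * (3 * max lam lam⁻¹) := by
            exact mul_lt_mul_of_pos_left h3 hmn_pos
        _ = 3 := by rw [show min lam lam⁻¹ * (3 * max lam lam⁻¹)
              = 3 * (min lam lam⁻¹ * max lam lam⁻¹) by ring, hmm]; ring
        _ ≤ (nbc G S' istar v : ℝ) := h2
    simp only [majStep, hSv]
    rw [if_neg (not_lt.mpr key.le)]
  -- induction
  have main : ∀ d : ℕ, ∀ v, C ≤ G.degree v → S (t + d) v = istar := by
    intro d
    induction d with
    | zero => simpa using hall
    | succ n ih =>
      intro v hv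
      have : S (t + n + 1) = majStep lam G (S (t + n)) := hS (t + n)
      rw [show t + (n + 1) = t + n + 1 by ring, this]
      exact step (S (t + n)) ih v hv
  intro s hs v hv
  have := main (s - t) v hv
  rwa [Nat.add_sub_cancel' hs] at this
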